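/- In the affine Weyl group Ã₄ (generators s₀,...,s₄ with standard cyclic presentation), for every natural number p the element (s₀s₁s₂s₃s₄)^p has length 5p in the Coxeter length function; equivalently, the word (s₀s₁s₂s₃s₄)^p is a reduced expression. -/

import Mathlib

/-- The Coxeter matrix of the affine Weyl group Ã_n: generators indexed by `Fin (n+1)`
arranged on a cycle, entries 1 on the diagonal, 3 for cyclically adjacent pairs, 2 otherwise. -/
def AtildeMatrix (n : ℕ) : CoxeterMatrix (Fin (n + 1)) where
  M := Matrix.of fun i j =>
    if i = j then 1
    else if (i.val + 1) % (n + 1) = j.val ∨ (j.val + 1) % (n + 1) = i.val then 3 else 2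
  isSymm := by
    ext i j
    simp only [Matrix.transpose_apply, Matrix.of_apply]
    by_cases h : i = j
    · simp [h]
    · have h2 : ¬j = i := fun h2 => h h2.symm
      simp [h, h2, or_comm]
  diagonal := fun i => by simp
  off_diagonal := fun i j h => by
    simp only [Matrix.of_apply, if_neg h]
    split <;> omega

namespace Atilde4Aux

def sigmaFun (a : ℕ) (t : ℤ) : ℤ :=
  if t % 5 = (a : ℤ) % 5 then t + 1 else if t % 5 = ((a : ℤ) + 1) % 5 then t - 1 else t

lemma sigmaFun_spec (a : ℕ) (t : ℤ) :
    (t % 5 = (a : ℤ) % 5 ∧ sigmaFun a t = t + 1) ∨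
    (t % 5 = ((a : ℤ) + 1) % 5 ∧ sigmaFun a t = t - 1) ∨
    (t % 5 ≠ (a : ℤ) % 5 ∧ t % 5 ≠ ((a : ℤ) + 1) % 5 ∧ sigmaFun a t = t) := by
  unfold sigmaFun
  split_ifs with h1 h2
  · exact Or.inl ⟨h1, rfl⟩
  · exact Or.inr (Or.inl ⟨h2, rfl⟩)
  · exact Or.inr (Or.inr ⟨h1, h2, rfl⟩)

lemma sigmaFun_inv (a : ℕ) : Function.Involutive (sigmaFun a) := by
  intro t; unfold sigmaFun; split_ifs <;> omega

def sigma (a : ℕ) : Equiv.Perm ℤ := (sigmaFun_inv a).toPerm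

lemma sigma_apply (a : ℕ) (t : ℤ) : sigma a t = sigmaFun a t := rfl

lemma sigma_sq (a : ℕ) : sigma a * sigma a = 1 := by
  ext t
  rw [Equiv.Perm.mul_apply, Equiv.Perm.one_apply, sigma_apply, sigma_apply]
  exact sigmaFun_inv a t

lemma pow3_expand (x : Equiv.Perm ℤ) : x ^ 3 = x * x * x := pow_three x

lemma pow2_expand (x : Equiv.Perm ℤ) : x ^ 2 = x * x := sq x

set_option maxHeartbeats 8000000 in
lemma braid (a b : ℕ) (h : (a + 1) % 5 = b % 5) : (sigma a * sigma b) ^ 3 = 1 := by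
  have h' : ((a : ℤ) + 1) % 5 = (b : ℤ) % 5 := by omega
  rw [pow3_expand]
  ext t
  simp only [Equiv.Perm.mul_apply, Equiv.Perm.one_apply, sigma_apply]
  have h1 := sigmaFun_spec b t
  have h2 := sigmaFun_spec a (sigmaFun b t)
  have h3 := sigmaFun_spec b (sigmaFun a (sigmaFun b t))
  have h4 := sigmaFun_spec a (sigmaFun b (sigmaFun a (sigmaFun b t)))
  have h5 := sigmaFun_spec b (sigmaFun a (sigmaFun b (sigmaFun a (sigmaFun b t))))
  have h6 := sigmaFun_spec a (sigmaFun b (sigmaFun a (sigmaFun b (sigmaFun a (sigmaFun b t)))))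
  omega

lemma braid' (a b : ℕ) (h : (b + 1) % 5 = a % 5) : (sigma a * sigma b) ^ 3 = 1 := by
  have key := braid b a h
  have h1 : sigma a * sigma b = sigma a * (sigma b * sigma a) * (sigma a)⁻¹ := by group
  rw [h1, conj_pow, key, mul_one, mul_inv_cancel]

set_option maxHeartbeats 2000000 in
lemma commute_case (a b : ℕ) (h1 : a % 5 ≠ b % 5) (h2 : (a + 1) % 5 ≠ b % 5)
    (h3 : (b + 1) % 5 ≠ a % 5) : (sigma a * sigma b) ^ 2 = 1 := by
  have h1' : (a : ℤ) % 5 ≠ (b : ℤ) % 5 := by omega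
  have h2' : ((a : ℤ) + 1) % 5 ≠ (b : ℤ) % 5 := by omega
  have h3' : ((b : ℤ) + 1) % 5 ≠ (a : ℤ) % 5 := by omega
  rw [pow2_expand]
  ext t
  simp only [Equiv.Perm.mul_apply, Equiv.Perm.one_apply, sigma_apply]
  have g1 := sigmaFun_spec b t
  have g2 := sigmaFun_spec a (sigmaFun b t)
  have g3 := sigmaFun_spec b (sigmaFun a (sigmaFun b t))
  have g4 := sigmaFun_spec a (sigmaFun b (sigmaFun a (sigmaFun b t)))
  omega

lemma liftable : (AtildeMatrix 4).IsLiftable (fun i : Fin 5 => sigma i.val) := by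
  intro i j
  have hM : (AtildeMatrix 4) i j =
      if i = j then 1
      else if (i.val + 1) % 5 = j.val ∨ (j.val + 1) % 5 = i.val then 3 else 2 := rfl
  rw [hM]
  by_cases hij : i = j
  · subst hij
    rw [if_pos rfl, pow_one]
    exact sigma_sq i.val
  · rw [if_neg hij]
    have hvi : i.val < 5 := i.isLt
    have hvj : j.val < 5 := j.isLt
    have hne : i.val ≠ j.val := fun h => hij (Fin.ext h)
    by_cases hadj : (i.val + 1) % 5 = j.val ∨ (j.val + 1) % 5 = i.val
    · rw [if_pos hadj]
      rcases hadj with h | h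
      · exact braid _ _ (by omega)
      · exact braid' _ _ (by omega)
    · rw [if_neg hadj]
      push_neg at hadj
      exact commute_case _ _ (by omega) (by omega) (by omega)

noncomputable def phi : (AtildeMatrix 4).Group →* Equiv.Perm ℤ :=
  (AtildeMatrix 4).toCoxeterSystem.lift ⟨fun i : Fin 5 => sigma i.val, liftable⟩

lemma phi_simple (i : Fin 5) : phi ((AtildeMatrix 4).simple i) = sigma i.val :=
  (AtildeMatrix 4).toCoxeterSystem.lift_apply_simple liftable i

lemma sigma_close (a : ℕ) (u : ℤ) : (sigma a u - u).natAbs ≤ 1 := by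
  rw [sigma_apply]; unfold sigmaFun; split_ifs <;> omega

lemma displacement_le (ω : List (Fin 5)) (t : ℤ) :
    (phi ((AtildeMatrix 4).toCoxeterSystem.wordProd ω) t - t).natAbs ≤ ω.length := by
  induction ω generalizing t with
  | nil => simp [CoxeterSystem.wordProd_nil]
  | cons i ω ih =>
    rw [CoxeterSystem.wordProd_cons, map_mul, Equiv.Perm.mul_apply]
    have h1 := ih t
    set u := phi ((AtildeMatrix 4).toCoxeterSystem.wordProd ω) t with hu
    have h2 : (phi ((AtildeMatrix 4).toCoxeterSystem.simple i) u - u).natAbs ≤ 1 := by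
      rw [CoxeterMatrix.toCoxeterSystem_simple, phi_simple]
      exact sigma_close i.val u
    simp only [List.length_cons]
    omega

def c4 : (AtildeMatrix 4).Group :=
  (AtildeMatrix 4).simple 0 * (AtildeMatrix 4).simple 1 * (AtildeMatrix 4).simple 2 *
    (AtildeMatrix 4).simple 3 * (AtildeMatrix 4).simple 4

lemma phi_c4_apply (t : ℤ) (ht : t % 5 = 0) : phi c4 t = t - 5 := by
  have e0 : ((0 : Fin 5)).val = 0 := rfl
  have e1 : ((1 : Fin 5)).val = 1 := rfl
  have e2 : ((2 : Fin 5)).val = 2 := rfl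
  have e3 : ((3 : Fin 5)).val = 3 := rfl
  have e4 : ((4 : Fin 5)).val = 4 := rfl
  have key : phi c4 t = sigma 0 (sigma 1 (sigma 2 (sigma 3 (sigma 4 t)))) := by
    simp only [c4, map_mul, phi_simple, Equiv.Perm.mul_apply, e0, e1, e2, e3, e4]
  rw [key]
  simp only [sigma_apply]
  have h1 := sigmaFun_spec 4 t
  have h2 := sigmaFun_spec 3 (sigmaFun 4 t)
  have h3 := sigmaFun_spec 2 (sigmaFun 3 (sigmaFun 4 t))
  have h4 := sigmaFun_spec 1 (sigmaFun 2 (sigmaFun 3 (sigmaFun 4 t)))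
  have h5 := sigmaFun_spec 0 (sigmaFun 1 (sigmaFun 2 (sigmaFun 3 (sigmaFun 4 t))))
  omega

lemma phi_c4_pow (p : ℕ) : phi (c4 ^ p) 0 = -(5 * p) := by
  induction p with
  | zero => simp
  | succ p ih =>
    rw [pow_succ', map_mul, Equiv.Perm.mul_apply, ih, phi_c4_apply _ (by omega)]
    push_cast
    ring

lemma c4_eq_wordProd : c4 = (AtildeMatrix 4).toCoxeterSystem.wordProd [0, 1, 2, 3, 4] := by
  simp only [CoxeterSystem.wordProd_cons, CoxeterSystem.wordProd_nil,
    CoxeterMatrix.toCoxeterSystem_simple, c4, mul_one, mul_assoc]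

end Atilde4Aux

open Atilde4Aux in
/-- In the affine Weyl group Ã₄, for every `p : ℕ` the element `(s₀s₁s₂s₃s₄)^p` has
Coxeter length `5p`; i.e. the word `(s₀s₁s₂s₃s₄)^p` is reduced. -/
theorem stmt18 (p : ℕ) :
    (AtildeMatrix 4).toCoxeterSystem.length
      (((AtildeMatrix 4).simple 0 * (AtildeMatrix 4).simple 1 * (AtildeMatrix 4).simple 2 *
          (AtildeMatrix 4).simple 3 * (AtildeMatrix 4).simple 4) ^ p) = 5 * p := by
  set cs := (AtildeMatrix 4).toCoxeterSystem with hcs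
  show cs.length (c4 ^ p) = 5 * p
  have hub : cs.length (c4 ^ p) ≤ 5 * p := by
    induction p with
    | zero => simp
    | succ p ih =>
      have h1 := cs.length_mul_le (c4 ^ p) c4
      have h2 : cs.length c4 ≤ 5 := by
        rw [c4_eq_wordProd]
        exact cs.length_wordProd_le [0, 1, 2, 3, 4]
      rw [pow_succ]
      omega
  have hlb : 5 * p ≤ cs.length (c4 ^ p) := by
    obtain ⟨ω, hlen, hw⟩ := cs.exists_reduced_word (c4 ^ p)
    have hd := displacement_le ω 0
    rw [← hw, phi_c4_pow p] at hd
    have hlen' := hlen.eq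
    rw [← hw] at hlen'
    omega
  omega
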